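/- With l(n) = (c(2n) − 1)/4, the limit as n → ∞ of l(4n+2)/l(4n+1) equals 17/5. -/

import Mathlib

def c (n : Nat) : Nat := ∑ i ∈ Finset.range (n+1), (Nat.choose n i % 2) * 2^i

def F (k : Nat) : Nat := 2^(2^k) + 1

noncomputable def l (n : Nat) : ℝ := ((c (2*n) : ℝ) - 1) / 4

/-- Auxiliary substituted version of `c`. -/
def g (x n : Nat) : Nat := ∑ i ∈ Finset.range (n+1), (Nat.choose n i % 2) * x^i

lemma c_eq_g (n : Nat) : c n = g 2 n := rfl

lemma par (n k : ℕ) :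
    Nat.choose n k % 2 = (Nat.choose (n % 2) (k % 2) * Nat.choose (n / 2) (k / 2)) % 2 := by
  haveI : Fact (Nat.Prime 2) := ⟨Nat.prime_two⟩
  exact Choose.choose_modEq_choose_mod_mul_choose_div_nat (p := 2)

lemma sum_split (f : ℕ → ℕ) (m : ℕ) :
    ∑ i ∈ Finset.range (2*m), f i = ∑ j ∈ Finset.range m, (f (2*j) + f (2*j+1)) := by
  induction m with
  | zero => simp
  | succ m ih =>
    have h2 : 2 * (m+1) = 2*m + 1 + 1 := by ring
    rw [h2, Finset.sum_range_succ, Finset.sum_range_succ, ih, Finset.sum_range_succ]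
    omega

lemma g_even (x m : ℕ) : g x (2*m) = g (x^2) m := by
  unfold g
  have hz : Nat.choose (2*m) (2*m+1) % 2 * x^(2*m+1) = 0 := by
    rw [Nat.choose_eq_zero_of_lt (by omega)]
    simp
  have hext : ∑ i ∈ Finset.range (2*m+1), Nat.choose (2*m) i % 2 * x^i
      = ∑ i ∈ Finset.range (2*(m+1)), Nat.choose (2*m) i % 2 * x^i := by
    have h2 : 2 * (m+1) = 2*m + 1 + 1 := by ring
    rw [h2, Finset.sum_range_succ _ (2*m+1), hz, add_zero]
  rw [hext, sum_split]
  refine Finset.sum_congr rfl ?_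
  intro j _
  have e1 : 2*m % 2 = 0 := by omega
  have e2 : 2*m / 2 = m := by omega
  have e3 : 2*j % 2 = 0 := by omega
  have e4 : 2*j / 2 = j := by omega
  have e5 : (2*j+1) % 2 = 1 := by omega
  have e6 : (2*j+1) / 2 = j := by omega
  rw [par (2*m) (2*j), par (2*m) (2*j+1), e1, e2, e3, e4, e5, e6]
  simp [pow_mul]

lemma g_odd (x m : ℕ) : g x (2*m+1) = (1 + x) * g (x^2) m := by
  unfold g
  have h2 : 2*m+1+1 = 2*(m+1) := by ring
  rw [h2, sum_split, Finset.mul_sum]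
  refine Finset.sum_congr rfl ?_
  intro j _
  have e1 : (2*m+1) % 2 = 1 := by omega
  have e2 : (2*m+1) / 2 = m := by omega
  have e3 : 2*j % 2 = 0 := by omega
  have e4 : 2*j / 2 = j := by omega
  have e5 : (2*j+1) % 2 = 1 := by omega
  have e6 : (2*j+1) / 2 = j := by omega
  rw [par (2*m+1) (2*j), par (2*m+1) (2*j+1), e1, e2, e3, e4, e5, e6]
  simp only [Nat.choose_self, Nat.choose_zero_right, one_mul]
  have hp : x^(2*j) = (x^2)^j := pow_mul x 2 j
  have hp2 : x^(2*j+1) = (x^2)^j * x := by rw [pow_succ, hp]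
  rw [hp, hp2]
  ring

lemma c_eq_17 (n : ℕ) : c (2*(4*n+2)) = 17 * g 256 n := by
  have h1 : 2*(4*n+2) = 2*(2*(2*n+1)) := by ring
  rw [c_eq_g, h1, g_even, g_even]
  norm_num
  have := g_odd 16 n
  norm_num at this
  rw [this]

lemma c_eq_5 (n : ℕ) : c (2*(4*n+1)) = 5 * g 256 n := by
  have h1 : 2*(4*n+1) = 2*(2*(2*n)+1) := by ring
  rw [c_eq_g, h1, g_even]
  norm_num
  have := g_odd 4 (2*n)
  norm_num at this
  rw [this, g_even]
  norm_num

lemma g_lower (n : ℕ) : n < g 256 n := by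
  have h1 : 256^n ≤ g 256 n := by
    have := Finset.single_le_sum (f := fun i => Nat.choose n i % 2 * 256^i)
      (fun i _ => Nat.zero_le _) (Finset.self_mem_range_succ n)
    simpa [g] using this
  have h2 : n < 256^n := Nat.lt_pow_self (by norm_num : 1 < 256)
  omega

lemma lim_aux : Filter.Tendsto (fun x : ℝ => (17*x - 1)/(5*x - 1)) Filter.atTop
    (nhds (17/5)) := by
  have hinv : Filter.Tendsto (fun x : ℝ => x⁻¹) Filter.atTop (nhds 0) :=
    tendsto_inv_atTop_zero
  have h17 : Filter.Tendsto (fun x : ℝ => 17 - x⁻¹) Filter.atTop (nhds 17) := by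
    simpa using (tendsto_const_nhds (x := (17:ℝ)) (f := Filter.atTop)).sub hinv
  have h5 : Filter.Tendsto (fun x : ℝ => 5 - x⁻¹) Filter.atTop (nhds 5) := by
    simpa using (tendsto_const_nhds (x := (5:ℝ)) (f := Filter.atTop)).sub hinv
  have h : Filter.Tendsto (fun x : ℝ => (17 - x⁻¹)/(5 - x⁻¹)) Filter.atTop (nhds (17/5)) :=
    h17.div h5 (by norm_num)
  refine h.congr' ?_
  filter_upwards [Filter.eventually_ge_atTop (1:ℝ)] with x hx
  have hx0 : x ≠ 0 := by linarith
  have hxinv : x⁻¹ ≤ 1 := by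
    rw [inv_le_one_iff₀]; right; linarith
  have h5x : 5 - x⁻¹ ≠ 0 := by
    have : x⁻¹ > 0 := by positivity
    intro h; nlinarith
  have h5x' : 5*x - 1 ≠ 0 := by nlinarith
  field_simp

theorem stmt13 :
    Filter.Tendsto (fun n : Nat => l (4*n+2) / l (4*n+1)) Filter.atTop (nhds (17/5)) := by
  have key : ∀ n : ℕ, l (4*n+2) / l (4*n+1)
      = (17*((g 256 n : ℕ) : ℝ) - 1)/(5*((g 256 n : ℕ) : ℝ) - 1) := by
    intro n
    unfold l
    rw [c_eq_17, c_eq_5]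
    push_cast
    rw [div_div_div_comm]
    norm_num
  have hG : Filter.Tendsto (fun n : ℕ => ((g 256 n : ℕ) : ℝ)) Filter.atTop Filter.atTop := by
    apply Filter.tendsto_atTop_mono (fun n => ?_) tendsto_natCast_atTop_atTop
    exact_mod_cast (g_lower n).le
  have := lim_aux.comp hG
  refine this.congr fun n => ?_
  simp only [Function.comp]
  exact (key n).symm
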